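/- Integral lemma: for non-negative integers β_0,...,β_{N−1}, ∫_{x ∈ ℝ^N_{≥0}, Σ_j x_j = 1} Δ(x) · ∏_j x_j^{β_j} (with respect to the δ(Σ x_j − 1) surface measure) equals (∏_j β_j!) · Δ(β) / (Σ_j β_j + L_N + N − 1)!, where L_N = N(N−1)/2 and Δ(x) = ∏_{i<j}(x_j − x_i). Equivalently, after integrating out x_{N−1}, the integral of Δ(x)∏ x_j^{β_j} over the simplex {x ∈ ℝ^{N−1}_{≥0} : Σ x_j ≤ 1} with x_{N−1} := 1 − Σ_{j<N−1} x_j has this value. -/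

import Mathlib

open MeasureTheory Finset Nat

open MeasureTheory Finset Nat intervalIntegral

lemma beta_nat (p q : ℕ) : ∀ s : ℝ,
    ∫ t in (0:ℝ)..s, t ^ p * (s - t) ^ q
      = (p ! : ℝ) * (q ! : ℝ) / ((p + q + 1)! : ℝ) * s ^ (p + q + 1) := by
  induction q generalizing p with
  | zero =>
    intro s
    simp only [pow_zero, mul_one, integral_pow, Nat.factorial_zero, Nat.cast_one]
    rw [Nat.add_zero]
    rw [Nat.factorial_succ]
    push_cast
    have hp : ((p:ℝ)+1) ≠ 0 := by positivity
    have h2 : ((p:ℝ)+1) * (p ! : ℝ) ≠ 0 := by positivity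
    field_simp
    ring
  | succ q ih =>
    intro s
    have key : ∫ t in (0:ℝ)..s, (s - t) ^ (q + 1) * t ^ p
        = ((q:ℝ)+1)/((p:ℝ)+1) * ∫ t in (0:ℝ)..s, t ^ (p+1) * (s - t) ^ q := by
      have hu : ∀ t ∈ Set.uIcc (0:ℝ) s, HasDerivAt (fun t : ℝ => (s - t) ^ (q + 1))
          (((q:ℝ)+1) * (s - t) ^ q * (-1)) t := by
        intro t _
        have h1 : HasDerivAt (fun t : ℝ => s - t) (-1) t :=
          (hasDerivAt_id t).const_sub s
        have := h1.fun_pow (q+1)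
        simpa using this
      have hv : ∀ t ∈ Set.uIcc (0:ℝ) s, HasDerivAt (fun t : ℝ => t ^ (p + 1) / ((p:ℝ)+1))
          (t ^ p) t := by
        intro t _
        have := (hasDerivAt_pow (p+1) t).div_const ((p:ℝ)+1)
        have hp : ((p:ℝ)+1) ≠ 0 := by positivity
        refine this.congr_deriv ?_
        push_cast
        field_simp
      have hiu : IntervalIntegrable (fun t : ℝ => ((q:ℝ)+1) * (s - t) ^ q * (-1))
          volume 0 s := (Continuous.intervalIntegrable (by continuity) _ _)
      have hiv : IntervalIntegrable (fun t : ℝ => t ^ p) volume 0 s :=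
        (Continuous.intervalIntegrable (by continuity) _ _)
      have := intervalIntegral.integral_mul_deriv_eq_deriv_mul hu hv hiu hiv
      rw [this]
      simp only [sub_self, zero_pow (Nat.succ_ne_zero q), zero_mul, zero_pow (Nat.succ_ne_zero p),
        zero_div, mul_zero, zero_sub, zero_mul, sub_zero]
      rw [← intervalIntegral.integral_neg, ← intervalIntegral.integral_const_mul]
      congr 1
      ext t
      field_simp
    have comm : ∫ t in (0:ℝ)..s, t ^ p * (s - t) ^ (q+1)
        = ∫ t in (0:ℝ)..s, (s - t) ^ (q + 1) * t ^ p := by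
      congr 1; ext t; ring
    rw [comm, key, ih (p+1)]
    have e1 : p + 1 + q + 1 = p + (q + 1) + 1 := by ring
    rw [e1]
    have h1 : ((p + (q+1) + 1)! : ℝ) ≠ 0 := by positivity
    have hp : ((p:ℝ)+1) ≠ 0 := by positivity
    rw [Nat.factorial_succ p, Nat.factorial_succ q]
    push_cast
    field_simp


def simplexSet (n : ℕ) : Set (Fin n → ℝ) := {x | (∀ j, 0 ≤ x j) ∧ ∑ j, x j ≤ 1}

lemma isClosed_simplexSet (n : ℕ) : IsClosed (simplexSet n) := by
  have : simplexSet n = (⋂ j, {x : Fin n → ℝ | 0 ≤ x j}) ∩ {x | ∑ j, x j ≤ 1} := by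
    ext x; simp [simplexSet, Set.mem_iInter]
  rw [this]
  exact ((isClosed_iInter fun j => isClosed_le continuous_const (continuous_apply j)).inter
    (isClosed_le (by continuity) continuous_const))

lemma isCompact_simplexSet (n : ℕ) : IsCompact (simplexSet n) := by
  refine IsCompact.of_isClosed_subset (isCompact_Icc (a := (0 : Fin n → ℝ)) (b := 1))
    (isClosed_simplexSet n) ?_
  intro x hx
  obtain ⟨h0, h1⟩ := hx
  constructor
  · intro j; exact h0 j
  · intro j
    calc x j ≤ ∑ i, x i := Finset.single_le_sum (fun i _ => h0 i) (Finset.mem_univ j)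
    _ ≤ 1 := h1

lemma snoc_prod_split {n : ℕ} (x : Fin n → ℝ) (s : ℝ) (a : Fin (n+1) → ℕ) :
    ∏ j : Fin (n+1), ((Fin.snoc x s : Fin (n+1) → ℝ) j) ^ a j
      = (∏ j : Fin n, x j ^ a j.castSucc) * s ^ a (Fin.last n) := by
  rw [Fin.prod_univ_castSucc]
  simp

theorem dirichlet : ∀ (n : ℕ) (a : Fin (n+1) → ℕ),
    (∫ x in simplexSet n,
      ∏ j : Fin (n+1), ((Fin.snoc x (1 - ∑ j', x j') : Fin (n+1) → ℝ) j) ^ a j)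
      = (∏ j, ((a j)! : ℝ)) / ((∑ j, a j + n)! : ℝ) := by
  intro n
  induction n with
  | zero =>
    intro a
    have huniv : simplexSet 0 = Set.univ := by
      ext x; simp [simplexSet]
    have hvol : (volume : Measure (Fin 0 → ℝ)) Set.univ = 1 := by
      simp [volume_pi, Measure.pi_univ]
    rw [huniv, setIntegral_univ]
    have : ∀ x : Fin 0 → ℝ,
        (∏ j : Fin 1, ((Fin.snoc x (1 - ∑ j', x j') : Fin 1 → ℝ) j) ^ a j) = 1 := by
      intro x
      have h0 : (0 : Fin 1) = Fin.last 0 := rfl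
      rw [Fin.prod_univ_one, h0, Fin.snoc_last]
      simp
    simp only [this]
    rw [MeasureTheory.integral_const, measureReal_def, hvol]
    have : ((a 0)! : ℝ) ≠ 0 := by positivity
    simp [this]
  | succ n ih =>
    intro a
    set p0 : ℕ := a ((Fin.last n).castSucc) with hp0
    set q0 : ℕ := a (Fin.last (n+1)) with hq0
    set b : Fin n → ℕ := fun j => a (j.castSucc.castSucc) with hb
    set C : ℝ := (p0 ! : ℝ) * (q0 ! : ℝ) / ((p0 + q0 + 1)! : ℝ) with hC
    set e : (Fin (n+1) → ℝ) ≃ᵐ ℝ × (Fin n → ℝ) :=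
      MeasurableEquiv.piFinSuccAbove (fun _ => ℝ) (Fin.last n) with he
    have hmp : MeasurePreserving e.symm
        ((volume : Measure ℝ).prod (volume : Measure (Fin n → ℝ)))
        (volume : Measure (Fin (n+1) → ℝ)) :=
      (volume_preserving_piFinSuccAbove (fun _ : Fin (n+1) => ℝ) (Fin.last n)).symm
    have hsymm : ∀ p : ℝ × (Fin n → ℝ), e.symm p = Fin.snoc p.2 p.1 := by
      intro p
      show (MeasurableEquiv.piFinSuccAbove (fun _ => ℝ) (Fin.last n)).symm p = _
      rw [MeasurableEquiv.piFinSuccAbove_symm_apply]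
      exact Fin.insertNth_last' p.1 p.2
    set A : Set (ℝ × (Fin n → ℝ)) :=
      {p | 0 ≤ p.1 ∧ (∀ j, 0 ≤ p.2 j) ∧ p.1 + ∑ j, p.2 j ≤ 1} with hA
    have hAclosed : IsClosed A := by
      have : A = ({p : ℝ × (Fin n → ℝ) | 0 ≤ p.1}
          ∩ ⋂ j, {p : ℝ × (Fin n → ℝ) | 0 ≤ p.2 j})
          ∩ {p : ℝ × (Fin n → ℝ) | p.1 + ∑ j, p.2 j ≤ 1} := by
        ext p; simp [hA, Set.mem_iInter]; tauto
      rw [this]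
      refine IsClosed.inter (IsClosed.inter ?_ ?_) ?_
      · exact isClosed_le continuous_const continuous_fst
      · exact isClosed_iInter fun j =>
          isClosed_le continuous_const ((continuous_apply j).comp continuous_snd)
      · exact isClosed_le (continuous_fst.add (continuous_finset_sum _ fun j _ =>
          (continuous_apply j).comp continuous_snd)) continuous_const
    have hAmeas : MeasurableSet A := hAclosed.measurableSet
    have hAcompact : IsCompact A := by
      refine IsCompact.of_isClosed_subset
        ((isCompact_Icc (a := (0:ℝ)) (b := 1)).prod
          (isCompact_Icc (a := (0 : Fin n → ℝ)) (b := 1))) hAclosed ?_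
      rintro ⟨t, y⟩ ⟨h1, h2, h3⟩
      have hyj : ∀ j, y j ≤ 1 := by
        intro j
        have := Finset.single_le_sum (fun i _ => h2 i) (Finset.mem_univ j)
        linarith [Finset.sum_nonneg (fun i (_ : i ∈ Finset.univ) => h2 i)]
      refine ⟨⟨h1, ?_⟩, fun j => h2 j, fun j => hyj j⟩
      have := Finset.sum_nonneg (fun i (_ : i ∈ Finset.univ) => h2 i)
      linarith
    have hsnoc_sum : ∀ (y : Fin n → ℝ) (t : ℝ),
        ∑ j : Fin (n+1), (Fin.snoc y t : Fin (n+1) → ℝ) j = ∑ j, y j + t := by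
      intro y t
      rw [Fin.sum_univ_castSucc]
      simp
    have hpre : e.symm ⁻¹' simplexSet (n+1) = A := by
      ext p
      obtain ⟨t, y⟩ := p
      simp only [Set.mem_preimage, hsymm, simplexSet, Set.mem_setOf_eq, hA, hsnoc_sum]
      constructor
      · rintro ⟨h0, h1⟩
        refine ⟨?_, fun j => ?_, ?_⟩
        · simpa using h0 (Fin.last n)
        · simpa using h0 j.castSucc
        · linarith
      · rintro ⟨h0, h1, h2⟩
        refine ⟨fun j => ?_, by linarith⟩
        refine Fin.lastCases ?_ (fun i => ?_) j
        · simpa using h0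
        · simpa using h1 i
    set G : ℝ × (Fin n → ℝ) → ℝ := fun p =>
      (∏ j : Fin n, p.2 j ^ b j) * (p.1 ^ p0 * (1 - ∑ j, p.2 j - p.1) ^ q0) with hG
    have hGcont : Continuous G := by
      apply Continuous.mul
      · exact continuous_finset_prod _ fun j _ =>
          ((continuous_apply j).comp continuous_snd).pow _
      · exact Continuous.mul (continuous_fst.pow _)
          ((((continuous_const.sub (continuous_finset_sum _ fun j _ =>
            (continuous_apply j).comp continuous_snd)).sub continuous_fst)).pow _)
    have hint : Integrable (A.indicator G)
        ((volume : Measure ℝ).prod (volume : Measure (Fin n → ℝ))) := by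
      rw [integrable_indicator_iff hAmeas]
      exact hGcont.continuousOn.integrableOn_compact hAcompact
    have hfG : ∀ p : ℝ × (Fin n → ℝ),
        (∏ j : Fin (n+2),
          ((Fin.snoc (e.symm p) (1 - ∑ j', (e.symm p) j') : Fin (n+2) → ℝ) j) ^ a j)
          = G p := by
      intro p
      obtain ⟨t, y⟩ := p
      rw [hsymm]
      rw [snoc_prod_split, hsnoc_sum]
      rw [Fin.prod_univ_castSucc]
      simp only [Fin.snoc_castSucc, Fin.snoc_last, hG]
      ring
    -- change variables
    rw [← hmp.setIntegral_preimage_emb e.symm.measurableEmbedding, hpre]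
    rw [show (∫ p in A, (∏ j : Fin (n+2),
          ((Fin.snoc (e.symm p) (1 - ∑ j', (e.symm p) j') : Fin (n+2) → ℝ) j) ^ a j)
          ∂((volume : Measure ℝ).prod (volume : Measure (Fin n → ℝ))))
        = ∫ p in A, G p ∂((volume : Measure ℝ).prod (volume : Measure (Fin n → ℝ)))
      from setIntegral_congr_fun hAmeas (fun p _ => hfG p)]
    -- Fubini
    rw [← MeasureTheory.integral_indicator hAmeas]
    rw [MeasureTheory.integral_prod_symm _ hint]
    have hinner : ∀ y : Fin n → ℝ,
        (∫ t, A.indicator G (t, y))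
          = (simplexSet n).indicator
              (fun y => (∏ j : Fin n, y j ^ b j) * (C * (1 - ∑ j, y j) ^ (p0+q0+1))) y := by
      intro y
      by_cases hy : ∀ j, 0 ≤ y j
      · have hsec : ∀ t : ℝ, A.indicator G (t, y)
            = (Set.Icc (0:ℝ) (1 - ∑ j, y j)).indicator (fun t => G (t, y)) t := by
          intro t
          have hiff : ((t, y) ∈ A) ↔ (t ∈ Set.Icc (0:ℝ) (1 - ∑ j, y j)) := by
            simp only [hA, Set.mem_setOf_eq, Set.mem_Icc]
            constructor
            · rintro ⟨h1, _, h3⟩; exact ⟨h1, by linarith⟩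
            · rintro ⟨h1, h2⟩; exact ⟨h1, hy, by linarith⟩
          simp only [Set.indicator_apply]
          rw [if_congr hiff rfl rfl]
        simp only [hsec]
        rw [MeasureTheory.integral_indicator measurableSet_Icc]
        by_cases hs : (∑ j, y j) ≤ 1
        · have hs' : (0:ℝ) ≤ 1 - ∑ j, y j := by linarith
          rw [MeasureTheory.integral_Icc_eq_integral_Ioc,
            ← intervalIntegral.integral_of_le hs']
          have hGt : (fun t : ℝ => G (t, y))
              = fun t : ℝ => (∏ j : Fin n, y j ^ b j)
                  * (t ^ p0 * ((1 - ∑ j, y j) - t) ^ q0) := by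
            funext t
            simp only [hG]
          rw [hGt, intervalIntegral.integral_const_mul, beta_nat]
          have hy' : y ∈ simplexSet n := ⟨hy, hs⟩
          rw [Set.indicator_of_mem hy', hC]
        · have hempty : Set.Icc (0:ℝ) (1 - ∑ j, y j) = ∅ :=
            Set.Icc_eq_empty (by intro h; exact hs (by linarith))
          rw [hempty, Measure.restrict_empty, MeasureTheory.integral_zero_measure]
          rw [Set.indicator_of_notMem (fun hmem => hs hmem.2)]
      · have hzero : ∀ t : ℝ, A.indicator G (t, y) = 0 := by
          intro t
          exact Set.indicator_of_notMem (fun hmem => hy hmem.2.1) _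
        simp only [hzero, MeasureTheory.integral_zero]
        rw [Set.indicator_of_notMem (fun hmem => hy hmem.1)]
    simp only [hinner]
    rw [MeasureTheory.integral_indicator (isClosed_simplexSet n).measurableSet]
    have hpull : (∫ y in simplexSet n,
          (∏ j : Fin n, y j ^ b j) * (C * (1 - ∑ j, y j) ^ (p0+q0+1)))
        = C * ∫ y in simplexSet n,
            (∏ j : Fin n, y j ^ b j) * (1 - ∑ j, y j) ^ (p0+q0+1) := by
      rw [← MeasureTheory.integral_const_mul]
      apply setIntegral_congr_fun (isClosed_simplexSet n).measurableSet
      intro y _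
      ring
    rw [hpull]
    have hih := ih (Fin.snoc b (p0+q0+1))
    simp only [snoc_prod_split, Fin.snoc_castSucc, Fin.snoc_last] at hih
    rw [hih]
    -- final algebra
    have hps : (∏ j : Fin (n+1), (((Fin.snoc b (p0+q0+1) : Fin (n+1) → ℕ) j)! : ℝ))
        = (∏ j : Fin n, ((b j)! : ℝ)) * (((p0+q0+1))! : ℝ) := by
      rw [Fin.prod_univ_castSucc]
      simp
    have hss : (∑ j : Fin (n+1), (Fin.snoc b (p0+q0+1) : Fin (n+1) → ℕ) j)
        = (∑ j : Fin n, b j) + (p0+q0+1) := by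
      rw [Fin.sum_univ_castSucc]
      simp
    rw [hps, hss]
    have hsum2 : ∑ j : Fin (n+2), a j = (∑ j : Fin n, b j) + p0 + q0 := by
      rw [Fin.sum_univ_castSucc (f := a), Fin.sum_univ_castSucc (f := fun j : Fin (n+1) => a j.castSucc)]
    have hprod2 : ∏ j : Fin (n+2), ((a j)! : ℝ)
        = (∏ j : Fin n, ((b j)! : ℝ)) * (p0 ! : ℝ) * (q0 ! : ℝ) := by
      rw [Fin.prod_univ_castSucc (f := fun j : Fin (n+2) => ((a j)! : ℝ)),
        Fin.prod_univ_castSucc (f := fun j : Fin (n+1) => ((a j.castSucc)! : ℝ))]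
    rw [hsum2, hprod2, hC]
    have hd1 : (((p0+q0+1)) ! : ℝ) ≠ 0 := by positivity
    have hd2 : (((∑ j : Fin n, b j) + (p0+q0+1) + n) ! : ℝ) ≠ 0 := by positivity
    have heq : (∑ j : Fin n, b j) + p0 + q0 + (n+1) = (∑ j : Fin n, b j) + (p0+q0+1) + n := by ring
    rw [heq]
    field_simp

section DetFact
open Polynomial

lemma fact_add_real (m : ℕ) : ∀ j : ℕ,
    ((m + j)! : ℝ) = (m ! : ℝ) * ∏ k ∈ Finset.range j, ((m : ℝ) + k + 1) := by
  intro j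
  induction j with
  | zero => simp
  | succ j ihj =>
    rw [show m + (j+1) = (m + j) + 1 from rfl, Nat.factorial_succ, Finset.prod_range_succ]
    push_cast
    rw [ihj]
    ring

lemma det_factorial {N : ℕ} (β : Fin N → ℕ) :
    Matrix.det (Matrix.of fun i j : Fin N => (((β i) + (j : ℕ))! : ℝ))
      = (∏ i, ((β i)! : ℝ)) * ∏ i : Fin N, ∏ j ∈ Finset.Ioi i, ((β j : ℝ) - (β i : ℝ)) := by
  set p : Fin N → ℝ[X] := fun j => ∏ k ∈ Finset.range (j : ℕ), (X + C ((k : ℝ) + 1)) with hp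
  have hmonic : ∀ j, (p j).Monic := fun j =>
    monic_prod_of_monic _ _ (fun k _ => monic_X_add_C _)
  have hdeg : ∀ j : Fin N, (p j).natDegree = (j : ℕ) := by
    intro j
    show (∏ k ∈ Finset.range (j : ℕ), (X + C ((k : ℝ) + 1))).natDegree = (j : ℕ)
    rw [Polynomial.natDegree_prod (s := Finset.range (j : ℕ))
      (f := fun k : ℕ => X + C ((k : ℝ) + 1))
      (fun k _ => (monic_X_add_C ((k:ℝ)+1)).ne_zero)]
    have hsum : ∑ i ∈ Finset.range (j:ℕ), (X + C ((i:ℝ)+1)).natDegree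
        = ∑ i ∈ Finset.range (j:ℕ), 1 :=
      Finset.sum_congr rfl (fun k _ => Polynomial.natDegree_X_add_C _)
    rw [hsum]
    simp
  have heval : ∀ (i j : Fin N), (p j).eval ((β i : ℕ) : ℝ)
      = ∏ k ∈ Finset.range (j : ℕ), (((β i : ℕ) : ℝ) + k + 1) := by
    intro i j
    show (∏ k ∈ Finset.range (j : ℕ), (X + C ((k : ℝ) + 1))).eval _ = _
    rw [Polynomial.eval_prod]
    apply Finset.prod_congr rfl
    intro k _
    simp [add_assoc]
  have h1 : (Matrix.of fun i j : Fin N => (((β i) + (j : ℕ))! : ℝ))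
      = Matrix.of (fun i j : Fin N => ((β i)! : ℝ) *
          (Matrix.of fun i j : Fin N => (p j).eval ((β i : ℕ) : ℝ)) i j) := by
    ext i j
    rw [Matrix.of_apply, Matrix.of_apply, Matrix.of_apply, heval, fact_add_real]
  rw [h1, Matrix.det_mul_column]
  congr 1
  rw [← Matrix.det_eval_matrixOfPolynomials_eq_det_vandermonde (fun i => ((β i : ℕ) : ℝ)) p
    hdeg hmonic]
  rw [Matrix.det_vandermonde]

end DetFact

lemma continuous_snocp (n : ℕ) (j : Fin (n+1)) :
    Continuous (fun x : Fin n → ℝ => (Fin.snoc x (1 - ∑ j', x j') : Fin (n+1) → ℝ) j) := by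
  refine Fin.lastCases ?_ (fun i => ?_) j
  · simp only [Fin.snoc_last]
    exact continuous_const.sub (continuous_finset_sum _ fun i _ => continuous_apply i)
  · simp only [Fin.snoc_castSucc]
    exact continuous_apply i


/-- Integral lemma: the integral over the simplex (with the last coordinate
`x_{N-1} = 1 - ∑ x_j` integrated out via the Dirac delta) of the Vandermonde
product `Δ(x)` times the monomial `∏ x_j^{β_j}` equals
`(∏_j β_j!) Δ(β) / (∑ β_j + L_N + N - 1)!`, where `N = n + 1` and
`L_N = N(N-1)/2`. -/
theorem vandermonde_simplex_moment (n : ℕ) (β : Fin (n + 1) → ℕ) :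
    (∫ x in {x : Fin n → ℝ | (∀ j, 0 ≤ x j) ∧ ∑ j, x j ≤ 1},
      (∏ i : Fin (n + 1), ∏ j ∈ Finset.Ioi i,
          ((Fin.snoc x (1 - ∑ j', x j') : Fin (n + 1) → ℝ) j -
            (Fin.snoc x (1 - ∑ j', x j') : Fin (n + 1) → ℝ) i)) *
        ∏ j : Fin (n + 1), ((Fin.snoc x (1 - ∑ j', x j') : Fin (n + 1) → ℝ) j) ^ β j)
    = (∏ j, ((β j)! : ℝ)) *
        (∏ i : Fin (n + 1), ∏ j ∈ Finset.Ioi i, ((β j : ℝ) - (β i : ℝ))) /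
        ((∑ j, β j + (n + 1) * n / 2 + n)! : ℝ) := by
  classical
  have hset : {x : Fin n → ℝ | (∀ j, 0 ≤ x j) ∧ ∑ j, x j ≤ 1} = simplexSet n := rfl
  rw [hset]
  set T : ℕ := (n+1) * n / 2 with hT
  set D : ℝ := ((∑ j, β j + T + n)! : ℝ) with hD
  set f : Equiv.Perm (Fin (n+1)) → (Fin n → ℝ) → ℝ := fun σ x =>
    ((Equiv.Perm.sign σ : ℤ) : ℝ) *
      ∏ j : Fin (n+1), ((Fin.snoc x (1 - ∑ j', x j') : Fin (n+1) → ℝ) j)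
        ^ (β j + ((σ⁻¹ j : Fin (n+1)) : ℕ)) with hf
  have hstep1 : ∀ x : Fin n → ℝ,
      (∏ i : Fin (n + 1), ∏ j ∈ Finset.Ioi i,
          ((Fin.snoc x (1 - ∑ j', x j') : Fin (n + 1) → ℝ) j -
            (Fin.snoc x (1 - ∑ j', x j') : Fin (n + 1) → ℝ) i)) *
        ∏ j : Fin (n + 1), ((Fin.snoc x (1 - ∑ j', x j') : Fin (n + 1) → ℝ) j) ^ β j
      = ∑ σ : Equiv.Perm (Fin (n+1)), f σ x := by
    intro x
    set v : Fin (n+1) → ℝ := (Fin.snoc x (1 - ∑ j', x j') : Fin (n+1) → ℝ) with hv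
    rw [← Matrix.det_vandermonde v, Matrix.det_apply, Finset.sum_mul]
    apply Finset.sum_congr rfl
    intro σ _
    simp only [hf, Matrix.vandermonde_apply, Units.smul_def, zsmul_eq_mul]
    have hsplit : ∏ j : Fin (n+1), v j ^ (β j + ((σ⁻¹ j : Fin (n+1)) : ℕ))
        = (∏ j : Fin (n+1), v j ^ ((σ⁻¹ j : Fin (n+1)) : ℕ)) * ∏ j : Fin (n+1), v j ^ β j := by
      rw [← Finset.prod_mul_distrib]
      apply Finset.prod_congr rfl
      intro j _
      rw [← pow_add]
      ring_nf
    have hperm : (∏ j : Fin (n+1), v j ^ ((σ⁻¹ j : Fin (n+1)) : ℕ))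
        = ∏ i : Fin (n+1), v (σ i) ^ (i : ℕ) := by
      rw [← Equiv.prod_comp σ (fun j => v j ^ ((σ⁻¹ j : Fin (n+1)) : ℕ))]
      apply Finset.prod_congr rfl
      intro i _
      rw [← Equiv.Perm.mul_apply, inv_mul_cancel, Equiv.Perm.one_apply]
    rw [hsplit, hperm]
    ring
  have hmeas : MeasurableSet (simplexSet n) := (isClosed_simplexSet n).measurableSet
  rw [setIntegral_congr_fun hmeas (fun x _ => hstep1 x)]
  have hintg : ∀ σ : Equiv.Perm (Fin (n+1)), IntegrableOn (f σ) (simplexSet n) volume := by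
    intro σ
    apply ContinuousOn.integrableOn_compact (isCompact_simplexSet n)
    apply Continuous.continuousOn
    exact continuous_const.mul
      (continuous_finset_prod _ fun j _ => (continuous_snocp n j).pow _)
  rw [MeasureTheory.integral_finset_sum _ (fun σ _ => hintg σ)]
  have hTsum : ∑ j : Fin (n+1), (j : ℕ) = T := by
    rw [Fin.sum_univ_eq_sum_range (fun i => i) (n+1), hT]
    have h2 := Finset.sum_range_id_mul_two (n+1)
    simp only [Nat.add_sub_cancel] at h2
    rw [← h2]
    omega
  have hterm : ∀ σ : Equiv.Perm (Fin (n+1)),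
      (∫ x in simplexSet n, f σ x)
        = ((Equiv.Perm.sign σ : ℤ) : ℝ) *
            ((∏ j : Fin (n+1), (((β j + ((σ⁻¹ j : Fin (n+1)) : ℕ)))! : ℝ)) / D) := by
    intro σ
    simp only [hf]
    rw [MeasureTheory.integral_const_mul]
    rw [dirichlet n (fun j => β j + ((σ⁻¹ j : Fin (n+1)) : ℕ))]
    have hds : ∑ j : Fin (n+1), (β j + ((σ⁻¹ j : Fin (n+1)) : ℕ)) = ∑ j, β j + T := by
      rw [Finset.sum_add_distrib]
      congr 1
      rw [Equiv.sum_comp (σ⁻¹ : Equiv.Perm (Fin (n+1))) (fun j : Fin (n+1) => (j : ℕ))]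
      exact hTsum
    rw [hds, hD]
  rw [Finset.sum_congr rfl (fun σ _ => hterm σ)]
  have hre : (∑ σ : Equiv.Perm (Fin (n+1)), ((Equiv.Perm.sign σ : ℤ) : ℝ) *
        ((∏ j : Fin (n+1), (((β j + ((σ⁻¹ j : Fin (n+1)) : ℕ)))! : ℝ)) / D))
      = ∑ σ : Equiv.Perm (Fin (n+1)), ((Equiv.Perm.sign σ : ℤ) : ℝ) *
        ((∏ j : Fin (n+1), (((β j + ((σ j : Fin (n+1)) : ℕ)))! : ℝ)) / D) := by
    rw [← Equiv.sum_comp (Equiv.inv (Equiv.Perm (Fin (n+1))))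
      (fun σ : Equiv.Perm (Fin (n+1)) => ((Equiv.Perm.sign σ : ℤ) : ℝ) *
        ((∏ j : Fin (n+1), (((β j + ((σ j : Fin (n+1)) : ℕ)))! : ℝ)) / D))]
    apply Finset.sum_congr rfl
    intro σ _
    simp only [Equiv.inv_apply, Equiv.Perm.sign_inv]
  rw [hre]
  have hdet : ∑ σ : Equiv.Perm (Fin (n+1)), ((Equiv.Perm.sign σ : ℤ) : ℝ) *
        ∏ j : Fin (n+1), (((β j + ((σ j : Fin (n+1)) : ℕ)))! : ℝ)
      = (∏ i, ((β i)! : ℝ)) * ∏ i : Fin (n+1), ∏ j ∈ Finset.Ioi i, ((β j : ℝ) - (β i : ℝ)) := by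
    have h1 : ∑ σ : Equiv.Perm (Fin (n+1)), ((Equiv.Perm.sign σ : ℤ) : ℝ) *
          ∏ j : Fin (n+1), (((β j + ((σ j : Fin (n+1)) : ℕ)))! : ℝ)
        = Matrix.det (Matrix.transpose (Matrix.of fun i j : Fin (n+1) => (((β i) + (j : ℕ))! : ℝ))) := by
      rw [Matrix.det_apply]
      apply Finset.sum_congr rfl
      intro σ _
      rw [Units.smul_def, zsmul_eq_mul]
      congr 1
    rw [h1, Matrix.det_transpose, det_factorial]
  simp_rw [← mul_div_assoc]
  rw [← Finset.sum_div, hdet]
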